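/- Let Z be an invertible n×n matrix over a field, i, j distinct indices with (Z⁻¹)_{j,i} ≠ 0. Then the inverse of the minor obtained by deleting row i and column j of Z equals the matrix N − N_{*,i}·(N_{j,i})⁻¹·N_{j,*} (where N = Z⁻¹), with row j and column i deleted. -/

import Mathlib

open Matrix

/-- Inverse of the minor via a rank-1 update of `N = Z⁻¹`: if `N j i ≠ 0`, then
the inverse of the matrix obtained from `Z` by deleting row `i` and column `j`
equals `N - N_{*,i} (N j i)⁻¹ N_{j,*}` with row `j` and column `i` deleted. -/
theorem minor_inverse_rank_one_update {F : Type*} [Field F] {n : ℕ}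
    (Z : Matrix (Fin (n + 1)) (Fin (n + 1)) F) (hZ : IsUnit Z.det)
    (i j : Fin (n + 1)) (hij : i ≠ j) (N : Matrix (Fin (n + 1)) (Fin (n + 1)) F)
    (hN : N = Z⁻¹) (hji : N j i ≠ 0) :
    (Z.submatrix i.succAbove j.succAbove)⁻¹ =
      (N - (N j i)⁻¹ •
          Matrix.vecMulVec (fun k => N k i) (fun l => N j l)).submatrix
        j.succAbove i.succAbove := by
  have hZN : Z * N = 1 := by rw [hN]; exact Matrix.mul_nonsing_inv Z hZ
  apply Matrix.inv_eq_right_inv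
  ext a b
  have key : ∀ c : Fin (n+1),
      ∑ k, Z (i.succAbove a) (j.succAbove k) * N (j.succAbove k) c
        = (1 : Matrix _ _ F) (i.succAbove a) c - Z (i.succAbove a) j * N j c := by
    intro c
    have h2 : ∑ l, Z (i.succAbove a) l * N l c = (1 : Matrix _ _ F) (i.succAbove a) c := by
      rw [← hZN, Matrix.mul_apply]
    rw [Fin.sum_univ_succAbove (fun l => Z (i.succAbove a) l * N l c) j] at h2
    exact eq_sub_of_add_eq' h2
  rw [Matrix.mul_apply]
  simp only [Matrix.submatrix_apply, Matrix.sub_apply, Matrix.smul_apply,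
    Matrix.vecMulVec_apply, smul_eq_mul, mul_sub]
  rw [Finset.sum_sub_distrib]
  have e1 := key (i.succAbove b)
  have e2 := key i
  have hia : (1 : Matrix _ _ F) (i.succAbove a) i = 0 := by
    rw [Matrix.one_apply_ne (Fin.succAbove_ne i a)]
  rw [hia, zero_sub] at e2
  have e2' : ∑ k, Z (i.succAbove a) (j.succAbove k) *
      ((N j i)⁻¹ * (N (j.succAbove k) i * N j (i.succAbove b)))
      = -(Z (i.succAbove a) j * N j (i.succAbove b)) := by
    have hr : ∀ k, Z (i.succAbove a) (j.succAbove k) *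
        ((N j i)⁻¹ * (N (j.succAbove k) i * N j (i.succAbove b)))
        = (Z (i.succAbove a) (j.succAbove k) * N (j.succAbove k) i) *
          ((N j i)⁻¹ * N j (i.succAbove b)) := by intro k; ring
    simp_rw [hr]
    rw [← Finset.sum_mul, e2]
    field_simp
  rw [e1, e2']
  have hone : (1 : Matrix _ _ F) (i.succAbove a) (i.succAbove b) =
      (1 : Matrix (Fin n) (Fin n) F) a b := by
    by_cases hab : a = b
    · subst hab; simp
    · rw [Matrix.one_apply_ne (fun h => hab (Fin.succAbove_right_injective h)),
        Matrix.one_apply_ne hab]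
  rw [hone]; ring
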